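/- arXiv:2111.08843 — 2 statements merged into one kernel-verified Lean document; each statement's English description precedes it below -/
import Mathlib

section
/- Let i ∈ [0, N−1] and J ⊆ [i+1, N−1], and set c = g_i ⊕ ⊕_{j∈J} g_j (sum over F_2). Then for every subset S ⊆ S_i there exists at least one subset T ⊆ T_i such that the coordinate c_{S∪T} equals 1. -/
noncomputable section
open scoped Classical
open Finset

/-- The 2×2 binary matrix [[1,0],[1,1]], as an ℕ-indexed function (zero outside range). -/
def G2 (a b : ℕ) : ZMod 2 :=
  if a = 0 ∧ b = 0 then 1
  else if a = 1 ∧ b = 0 then 1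
  else if a = 1 ∧ b = 1 then 1
  else 0

/-- `G n i c` is the (i,c) entry of the n-th Kronecker power over F₂ of [[1,0],[1,1]],
for row/column indices i, c ∈ [0, 2^n − 1] (standard row-major index flattening). -/
def G : ℕ → ℕ → ℕ → ZMod 2
  | 0 => fun i c => if i = 0 ∧ c = 0 then 1 else 0
  | n + 1 => fun i c => G2 (i / 2 ^ n) (c / 2 ^ n) * G n (i % 2 ^ n) (c % 2 ^ n)

/-- Row i of the polar transform G_N (N = 2^n), as a vector of its coordinates. -/
def g (n i : ℕ) : ℕ → ZMod 2 := fun c => G n i c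

/-- S_i ⊆ [0, n−1]: the support of the binary representation of i. -/
def S (n i : ℕ) : Finset ℕ := (Finset.range n).filter fun a => i.testBit a

/-- T_i = [0, n−1] \ S_i. -/
def T (n i : ℕ) : Finset ℕ := Finset.range n \ S n i

/-- Hamming weight of a vector whose coordinates are indexed by [0, 2^n − 1]. -/
def wt (n : ℕ) (v : ℕ → ZMod 2) : ℕ :=
  ((Finset.range (2 ^ n)).filter fun c => v c ≠ 0).card

/-- The index in [0, 2^n − 1] whose binary support is the set U ⊆ [0, n−1]. -/
def idx (U : Finset ℕ) : ℕ := ∑ a ∈ U, 2 ^ a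

/-- K_i = {j ∈ [i+1, N−1] : w(g_j) ≥ w(g_i ⊕ g_j) and w(g_i ⊕ g_j) = w(g_i)}. -/
def K (n i : ℕ) : Finset ℕ :=
  (Finset.Ico (i + 1) (2 ^ n)).filter fun j =>
    wt n (g n i + g n j) ≤ wt n (g n j) ∧ wt n (g n i + g n j) = wt n (g n i)

/-- One generating step of the partial order on [0, 2^n − 1]. -/
def poStep (n i j : ℕ) : Prop :=
  i < 2 ^ n ∧ j < 2 ^ n ∧
    (S n i ⊆ S n j ∨
      ∃ a b, a ∈ S n i ∧ b ∉ S n i ∧ a < b ∧ S n j = insert b (S n i \ {a}))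

/-- The partial order ⪯: reflexive–transitive closure of the generating relation. -/
def po (n : ℕ) : ℕ → ℕ → Prop := Relation.ReflTransGen (poStep n)

/-- Partial Order Property of an information set I ⊆ [0, 2^n − 1]. -/
def POP (n : ℕ) (I : Finset ℕ) : Prop :=
  ∀ i ∈ I, ∀ j, j < 2 ^ n → po n i j → j ∈ I

/-- The code C(I): all F₂-linear combinations (i.e. subset sums) of the rows g_i, i ∈ I. -/
def codewords (n : ℕ) (I : Finset ℕ) : Finset (ℕ → ZMod 2) :=
  I.powerset.image fun H => ∑ h ∈ H, g n h

/-- A_w(I): the number of codewords of C(I) of Hamming weight w. -/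
def A (n : ℕ) (I : Finset ℕ) (w : ℕ) : ℕ :=
  ((codewords n I).filter fun v => wt n v = w).card

/-- The coset C_i(I) = {g_i ⊕ ⊕_{h∈H} g_h : H ⊆ I \ [0,i]}. -/
def coset (n : ℕ) (I : Finset ℕ) (i : ℕ) : Finset (ℕ → ZMod 2) :=
  ((I.filter fun h => i < h).powerset).image fun H => g n i + ∑ h ∈ H, g n h

/-- A_{i,w}(I): the number of vectors of Hamming weight w in the coset C_i(I). -/
def Ai (n : ℕ) (I : Finset ℕ) (i w : ℕ) : ℕ :=
  ((coset n I i).filter fun v => wt n v = w).card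


/- ===== auxiliary lemmas ===== -/

lemma sum_range_two_pow (n : ℕ) : ∑ a ∈ Finset.range n, 2 ^ a + 1 = 2 ^ n := by
  induction n with
  | zero => simp
  | succ n ih => rw [Finset.sum_range_succ, pow_succ]; omega

lemma idx_lt {n : ℕ} {U : Finset ℕ} (hU : U ⊆ Finset.range n) : idx U < 2 ^ n := by
  have h1 : idx U ≤ ∑ a ∈ Finset.range n, 2 ^ a :=
    Finset.sum_le_sum_of_subset hU
  have := sum_range_two_pow n
  omega

lemma testBit_idx {n : ℕ} {U : Finset ℕ} (hU : U ⊆ Finset.range n) (b : ℕ) :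
    (idx U).testBit b = (b ∈ U) := by
  induction n generalizing U with
  | zero =>
    simp only [Finset.range_zero, Finset.subset_empty] at hU
    subst hU; simp [idx]
  | succ n ih =>
    by_cases hn : n ∈ U
    · have herase : U.erase n ⊆ Finset.range n := by
        intro x hx
        have hx2 := hU (Finset.mem_of_mem_erase hx)
        simp only [Finset.mem_range] at hx2 ⊢
        have := Finset.ne_of_mem_erase hx
        omega
      have hidx : idx U = 2 ^ n + idx (U.erase n) := by
        rw [idx, idx]
        exact (Finset.add_sum_erase U (fun a => 2 ^ a) hn).symm
      have hlt : idx (U.erase n) < 2 ^ n := idx_lt herase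
      rcases lt_trichotomy b n with hb | hb | hb
      · -- b < n : reduce mod 2^n
        have hmod : (idx U) % 2 ^ n = idx (U.erase n) := by
          rw [hidx, Nat.add_mod_left, Nat.mod_eq_of_lt hlt]
        have h5 := Nat.testBit_mod_two_pow (idx U) n b
        rw [hmod, ih herase] at h5
        simp only [hb, decide_true, Bool.true_and] at h5
        rw [← h5]
        have hbn : b ≠ n := by omega
        simp only [Finset.mem_erase, hbn, ne_eq, not_false_iff, true_and]
      · subst hb
        have : idx U / 2 ^ b % 2 = 1 := by
          rw [hidx, Nat.add_div_left _ (Nat.two_pow_pos b),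
            Nat.div_eq_of_lt hlt]
        simp [Nat.testBit_eq_decide_div_mod_eq, this, hn]
      · have h2 : idx U < 2 ^ b := by
          have : 2 ^ (n + 1) ≤ 2 ^ b := Nat.pow_le_pow_right (by norm_num) (by omega)
          have : idx U < 2 ^ (n + 1) := by rw [hidx, pow_succ]; omega
          omega
        rw [Nat.testBit_eq_false_of_lt h2]
        have : b ∉ U := fun h => by
          have := hU h; simp only [Finset.mem_range] at this; omega
        simp [this]
    · have : U ⊆ Finset.range n := by
        intro x hx
        have := hU hx; simp only [Finset.mem_range] at this ⊢
        rcases Nat.lt_succ_iff_lt_or_eq.mp this with h | h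
        · exact h
        · exact absurd (h ▸ hx) hn
      exact ih this

lemma S_idx {n : ℕ} {U : Finset ℕ} (hU : U ⊆ Finset.range n) : S n (idx U) = U := by
  ext b
  simp only [S, Finset.mem_filter, Finset.mem_range, testBit_idx hU, decide_eq_true_eq]
  exact ⟨fun h => h.2, fun h => ⟨Finset.mem_range.mp (hU h), h⟩⟩

lemma S_subset_range (n i : ℕ) : S n i ⊆ Finset.range n := Finset.filter_subset _ _

lemma idx_S {n i : ℕ} (hi : i < 2 ^ n) : idx (S n i) = i := by
  apply Nat.eq_of_testBit_eq
  intro b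
  rw [testBit_idx (S_subset_range n i) b]
  by_cases hb : b < n
  · simp [S, hb]
  · have : i < 2 ^ b := lt_of_lt_of_le hi (Nat.pow_le_pow_right (by norm_num) (by omega))
    rw [Nat.testBit_eq_false_of_lt this]
    simp [S, hb]

lemma mem_S_iff {n x b : ℕ} (hx : x < 2 ^ (n + 1)) :
    b ∈ S (n + 1) x ↔ b ∈ S n (x % 2 ^ n) ∨ (b = n ∧ x.testBit n) := by
  simp only [S, Finset.mem_filter, Finset.mem_range, Nat.testBit_mod_two_pow]
  constructor
  · rintro ⟨hb, ht⟩
    rcases Nat.lt_succ_iff_lt_or_eq.mp hb with h | h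
    · left; exact ⟨h, by simp [h, ht]⟩
    · right; exact ⟨h, h ▸ ht⟩
  · rintro (⟨hb, ht⟩ | ⟨hb, ht⟩)
    · simp only [hb, decide_true, Bool.true_and] at ht
      exact ⟨by omega, ht⟩
    · exact ⟨by omega, hb ▸ ht⟩

lemma G_entry : ∀ n i c, i < 2 ^ n → c < 2 ^ n →
    G n i c = if S n c ⊆ S n i then 1 else 0 := by
  intro n
  induction n with
  | zero =>
    intro i c hi hc
    interval_cases i
    interval_cases c
    simp [G]
  | succ n ih =>
    intro i c hi hc
    have hpow : 0 < 2 ^ n := Nat.two_pow_pos n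
    have him : i % 2 ^ n < 2 ^ n := Nat.mod_lt _ hpow
    have hcm : c % 2 ^ n < 2 ^ n := Nat.mod_lt _ hpow
    have hid : i / 2 ^ n < 2 := by
      rw [Nat.div_lt_iff_lt_mul hpow]; rw [pow_succ] at hi; omega
    have hcd : c / 2 ^ n < 2 := by
      rw [Nat.div_lt_iff_lt_mul hpow]; rw [pow_succ] at hc; omega
    have hti : i.testBit n = decide (i / 2 ^ n = 1) := by
      rw [Nat.testBit_eq_decide_div_mod_eq]
      congr 1
      rcases Nat.le_one_iff_eq_zero_or_eq_one.mp (Nat.lt_succ_iff.mp hid) with h | h <;> simp [h]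
    have htc : c.testBit n = decide (c / 2 ^ n = 1) := by
      rw [Nat.testBit_eq_decide_div_mod_eq]
      congr 1
      rcases Nat.le_one_iff_eq_zero_or_eq_one.mp (Nat.lt_succ_iff.mp hcd) with h | h <;> simp [h]
    have hsub : (S (n+1) c ⊆ S (n+1) i) ↔
        (S n (c % 2 ^ n) ⊆ S n (i % 2 ^ n) ∧ (c.testBit n → i.testBit n)) := by
      constructor
      · intro h
        constructor
        · intro b hb
          have hb' : b ∈ S (n+1) c := (mem_S_iff hc).mpr (Or.inl hb)
          have := (mem_S_iff hi).mp (h hb')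
          rcases this with h2 | ⟨h2, _⟩
          · exact h2
          · exfalso
            have : b < n := Finset.mem_range.mp (S_subset_range n _ hb)
            omega
        · intro hct
          have hb' : n ∈ S (n+1) c := (mem_S_iff hc).mpr (Or.inr ⟨rfl, hct⟩)
          have := (mem_S_iff hi).mp (h hb')
          rcases this with h2 | ⟨_, h2⟩
          · exfalso
            have : n < n := Finset.mem_range.mp (S_subset_range n _ h2)
            omega
          · exact h2
      · rintro ⟨h1, h2⟩ b hb
        rcases (mem_S_iff hc).mp hb with h3 | ⟨h3, h4⟩
        · exact (mem_S_iff hi).mpr (Or.inl (h1 h3))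
        · exact (mem_S_iff hi).mpr (Or.inr ⟨h3, h2 h4⟩)
    show G2 (i / 2 ^ n) (c / 2 ^ n) * G n (i % 2 ^ n) (c % 2 ^ n) = _
    rw [ih _ _ him hcm]
    have hG2 : G2 (i / 2 ^ n) (c / 2 ^ n) =
        if (c.testBit n → i.testBit n) then 1 else 0 := by
      rw [hti, htc]
      rcases Nat.le_one_iff_eq_zero_or_eq_one.mp (Nat.lt_succ_iff.mp hid) with h | h <;>
        rcases Nat.le_one_iff_eq_zero_or_eq_one.mp (Nat.lt_succ_iff.mp hcd) with h' | h' <;>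
        simp [h, h', G2]
    rw [hG2]
    simp only [hsub]
    by_cases hA : c.testBit n = true → i.testBit n = true <;>
      by_cases hB : S n (c % 2 ^ n) ⊆ S n (i % 2 ^ n) <;>
      simp [hA, hB]

lemma g_coord {n j : ℕ} (hj : j < 2 ^ n) {U : Finset ℕ} (hU : U ⊆ Finset.range n) :
    g n j (idx U) = if U ⊆ S n j then 1 else 0 := by
  rw [g, G_entry n j (idx U) hj (idx_lt hU), S_idx hU]

lemma sum_g_coset {n j : ℕ} (hj : j < 2 ^ n) {Sa W : Finset ℕ}
    (hSa : Sa ⊆ Finset.range n) (hW : W ⊆ Finset.range n) :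
    ∑ Ta ∈ W.powerset, g n j (idx (Sa ∪ Ta)) =
      if Sa ⊆ S n j ∧ W ∩ S n j = ∅ then 1 else 0 := by
  have hcoord : ∀ Ta ∈ W.powerset, g n j (idx (Sa ∪ Ta)) =
      if Sa ∪ Ta ⊆ S n j then 1 else 0 := by
    intro Ta hTa
    exact g_coord hj (Finset.union_subset hSa
      ((Finset.mem_powerset.mp hTa).trans hW))
  rw [Finset.sum_congr rfl hcoord, Finset.sum_boole]
  have hfilter : (W.powerset.filter fun Ta => Sa ∪ Ta ⊆ S n j) =
      if Sa ⊆ S n j then (W ∩ S n j).powerset else ∅ := by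
    ext Ta
    split_ifs with h
    · simp only [Finset.mem_filter, Finset.mem_powerset, Finset.union_subset_iff,
        Finset.subset_inter_iff]
      tauto
    · simp only [Finset.mem_filter, Finset.mem_powerset, Finset.union_subset_iff,
        Finset.notMem_empty, iff_false]
      tauto
  rw [hfilter]
  by_cases h1 : Sa ⊆ S n j
  · by_cases h2 : W ∩ S n j = ∅
    · simp [h1, h2]
    · simp only [h1, h2, if_true, and_true, and_false, if_false]
      rw [Finset.card_powerset]
      have hne : (W ∩ S n j).Nonempty := Finset.nonempty_iff_ne_empty.mpr h2
      have hcard : 0 < (W ∩ S n j).card := Finset.card_pos.mpr hne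
      obtain ⟨k, hk⟩ : ∃ k, (W ∩ S n j).card = k + 1 :=
        ⟨_, (Nat.succ_pred_eq_of_pos hcard).symm⟩
      rw [hk, pow_succ]
      push_cast
      have h20 : (2 : ZMod 2) = 0 := by decide
      rw [h20]
      ring
  · simp [h1]

/-- for c = g_i ⊕ ⊕_{j∈J} g_j with J ⊆ [i+1, N−1], for every S ⊆ S_i there is
some T ⊆ T_i with c_{S∪T} = 1. -/
theorem exists_one_coordinate (n : ℕ) (hn : 1 ≤ n) (i : ℕ) (hi : i < 2 ^ n)
    (J : Finset ℕ) (hJ : J ⊆ Finset.Ico (i + 1) (2 ^ n)) :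
    ∀ Sa ⊆ S n i, ∃ Ta ⊆ T n i,
      (g n i + ∑ j ∈ J, g n j) (idx (Sa ∪ Ta)) = 1 := by
  intro Sa hSa
  by_contra hcon
  push_neg at hcon
  have hSr : Sa ⊆ Finset.range n := hSa.trans (S_subset_range n i)
  have hTr : T n i ⊆ Finset.range n := Finset.sdiff_subset
  have hzero : ∀ Ta ∈ (T n i).powerset, (g n i + ∑ j ∈ J, g n j) (idx (Sa ∪ Ta)) = 0 := by
    intro Ta hTa
    have h1 := hcon Ta (Finset.mem_powerset.mp hTa)
    have hx : ∀ x : ZMod 2, x ≠ 1 → x = 0 := by decide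
    exact hx _ h1
  have hsum0 : ∑ Ta ∈ (T n i).powerset, (g n i + ∑ j ∈ J, g n j) (idx (Sa ∪ Ta)) = 0 :=
    Finset.sum_eq_zero hzero
  have hsum1 : ∑ Ta ∈ (T n i).powerset, (g n i + ∑ j ∈ J, g n j) (idx (Sa ∪ Ta)) = 1 := by
    have hexp : ∀ Ta, (g n i + ∑ j ∈ J, g n j) (idx (Sa ∪ Ta)) =
        g n i (idx (Sa ∪ Ta)) + ∑ j ∈ J, g n j (idx (Sa ∪ Ta)) := by
      intro Ta
      simp [Finset.sum_apply, Pi.add_apply]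
    rw [Finset.sum_congr rfl fun Ta _ => hexp Ta, Finset.sum_add_distrib]
    have hterm1 : ∑ Ta ∈ (T n i).powerset, g n i (idx (Sa ∪ Ta)) = 1 := by
      rw [sum_g_coset hi hSr hTr]
      have hTSi : T n i ∩ S n i = ∅ := Finset.sdiff_inter_self (S n i) (Finset.range n)
      simp [hSa, hTSi]
    have hterm2 : ∑ Ta ∈ (T n i).powerset, ∑ j ∈ J, g n j (idx (Sa ∪ Ta)) = 0 := by
      rw [Finset.sum_comm]
      apply Finset.sum_eq_zero
      intro j hj
      have hjIco := hJ hj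
      rw [Finset.mem_Ico] at hjIco
      rw [sum_g_coset hjIco.2 hSr hTr]
      have hfalse : ¬(Sa ⊆ S n j ∧ T n i ∩ S n j = ∅) := by
        rintro ⟨hc1, hc2⟩
        have hSji : S n j ⊆ S n i := by
          intro b hb
          by_contra hbn
          have hbR : b ∈ Finset.range n := S_subset_range n j hb
          have hbT : b ∈ T n i := Finset.mem_sdiff.mpr ⟨hbR, by simpa using hbn⟩
          have : b ∈ T n i ∩ S n j := Finset.mem_inter.mpr ⟨hbT, hb⟩
          rw [hc2] at this
          exact absurd this (Finset.notMem_empty b)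
        have hle : j ≤ i := by
          have h1 : idx (S n j) ≤ idx (S n i) := Finset.sum_le_sum_of_subset hSji
          rwa [idx_S hjIco.2, idx_S hi] at h1
        omega
      simp [hfalse]
    rw [hterm1, hterm2, add_zero]
  rw [hsum0] at hsum1
  exact absurd hsum1 (by decide)
end
end

section
/- For every nonempty set I ⊆ [0, N−1], the minimum Hamming weight over all nonzero codewords of the linear code C(I) spanned by the rows {g_i : i ∈ I} equals min_{i∈I} w(g_i) = min_{i∈I} 2^{|S_i|}; in particular, the minimum distance of any polar code C(I) equals min_{i∈I} w(g_i). -/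
noncomputable section
open scoped Classical
open Finset

-- basic G2 values
lemma G2_00 : G2 0 0 = 1 := by simp [G2]
lemma G2_10 : G2 1 0 = 1 := by simp [G2]
lemma G2_11 : G2 1 1 = 1 := by simp [G2]
lemma G2_01 : G2 0 1 = 0 := by simp [G2]

lemma pow2_pos (n : ℕ) : 0 < 2 ^ n := pow_pos (by norm_num) n

lemma G_low_low {n i c : ℕ} (hi : i < 2 ^ n) (hc : c < 2 ^ n) :
    G (n + 1) i c = G n i c := by
  simp [G, Nat.div_eq_of_lt hi, Nat.div_eq_of_lt hc, Nat.mod_eq_of_lt hi,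
    Nat.mod_eq_of_lt hc, G2_00]

lemma G_low_high {n i c : ℕ} (hi : i < 2 ^ n) :
    G (n + 1) i (c + 2 ^ n) = 0 := by
  have h1 : (c + 2 ^ n) / 2 ^ n = c / 2 ^ n + 1 := Nat.add_div_right c (pow2_pos n)
  simp only [G, Nat.div_eq_of_lt hi, h1]
  rcases Nat.eq_zero_or_pos (c / 2 ^ n) with h | h
  · rw [h]; simp [G2]
  · have : ¬ (c / 2 ^ n + 1 = 0) := by omega
    have h2 : ¬ (c / 2 ^ n + 1 = 1) := by omega
    simp [G2, this, h2]

lemma G_high_low {n i c : ℕ} (hi : i < 2 ^ n) (hc : c < 2 ^ n) :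
    G (n + 1) (i + 2 ^ n) c = G n i c := by
  have h1 : (i + 2 ^ n) / 2 ^ n = 1 := by
    rw [Nat.add_div_right i (pow2_pos n), Nat.div_eq_of_lt hi]
  have h2 : (i + 2 ^ n) % 2 ^ n = i := by
    rw [Nat.add_mod_right, Nat.mod_eq_of_lt hi]
  simp [G, h1, h2, Nat.div_eq_of_lt hc, Nat.mod_eq_of_lt hc, G2_10]

lemma G_high_high {n i c : ℕ} (hi : i < 2 ^ n) (hc : c < 2 ^ n) :
    G (n + 1) (i + 2 ^ n) (c + 2 ^ n) = G n i c := by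
  have h1 : (i + 2 ^ n) / 2 ^ n = 1 := by
    rw [Nat.add_div_right i (pow2_pos n), Nat.div_eq_of_lt hi]
  have h1' : (c + 2 ^ n) / 2 ^ n = 1 := by
    rw [Nat.add_div_right c (pow2_pos n), Nat.div_eq_of_lt hc]
  have h2 : (i + 2 ^ n) % 2 ^ n = i := by
    rw [Nat.add_mod_right, Nat.mod_eq_of_lt hi]
  have h2' : (c + 2 ^ n) % 2 ^ n = c := by
    rw [Nat.add_mod_right, Nat.mod_eq_of_lt hc]
  simp [G, h1, h1', h2, h2', G2_11]

lemma G_self : ∀ n i, i < 2 ^ n → G n i i = 1 := by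
  intro n
  induction n with
  | zero => intro i hi; interval_cases i; simp [G]
  | succ n ih =>
    intro i hi
    rcases lt_or_ge i (2 ^ n) with h | h
    · rw [G_low_low h h]; exact ih i h
    · obtain ⟨r, hr⟩ : ∃ r, i = r + 2 ^ n := ⟨i - 2 ^ n, by omega⟩
      have hrlt : r < 2 ^ n := by
        have := hi; rw [hr] at this; rw [pow_succ] at this; omega
      rw [hr, G_high_high hrlt hrlt]; exact ih r hrlt

-- weight splitting
lemma wt_succ (n : ℕ) (v : ℕ → ZMod 2) :
    wt (n + 1) v = wt n v + wt n (fun c => v (c + 2 ^ n)) := by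
  unfold wt
  have h : (2 : ℕ) ^ (n + 1) = 2 ^ n + 2 ^ n := by ring
  rw [h, Finset.range_add, Finset.filter_union, Finset.card_union_of_disjoint]
  · congr 1
    rw [Finset.filter_map, Finset.card_map]
    congr 1
    apply Finset.filter_congr
    intro c _
    simp [addLeftEmbedding, add_comm]
  · apply Finset.disjoint_filter_filter
    apply Finset.disjoint_left.mpr
    intro a ha hb
    simp only [Finset.mem_map, Finset.mem_range] at ha hb
    obtain ⟨b, hb1, hb2⟩ := hb
    have : addLeftEmbedding (2^n) b = 2 ^ n + b := rfl
    omega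

lemma wt_congr {n : ℕ} {v w : ℕ → ZMod 2} (h : ∀ c < 2 ^ n, v c = w c) :
    wt n v = wt n w := by
  unfold wt
  congr 1
  apply Finset.filter_congr
  intro c hc
  rw [h c (Finset.mem_range.mp hc)]

lemma wt_zero (n : ℕ) : wt n 0 = 0 := by simp [wt]


-- S lemmas
lemma testBit_add_pow {n a r : ℕ} (ha : a < n) : (r + 2 ^ n).testBit a = r.testBit a := by
  rw [Nat.testBit_eq_decide_div_mod_eq, Nat.testBit_eq_decide_div_mod_eq]
  have h1 : (2 : ℕ) ^ n = 2 ^ a * 2 ^ (n - a) := by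
    rw [← pow_add]; congr 1; omega
  rw [h1, Nat.add_mul_div_left _ _ (pow2_pos a)]
  have h2 : (2 : ℕ) ^ (n - a) = 2 ^ (n - a - 1) * 2 := by
    rw [← pow_succ]; congr 1; omega
  rw [h2, ← mul_comm 2 (2 ^ (n - a - 1)), Nat.add_mul_mod_self_left]

lemma testBit_self_add {n r : ℕ} (hr : r < 2 ^ n) : (r + 2 ^ n).testBit n = true := by
  rw [Nat.testBit_eq_decide_div_mod_eq]
  rw [Nat.add_div_right _ (pow2_pos n), Nat.div_eq_of_lt hr]
  norm_num

lemma S_low {n i : ℕ} (hi : i < 2 ^ n) : S (n + 1) i = S n i := by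
  unfold S
  rw [Finset.range_add_one, Finset.filter_insert,
    if_neg (by simp [Nat.testBit_eq_false_of_lt hi])]

lemma S_high {n r : ℕ} (hr : r < 2 ^ n) :
    S (n + 1) (r + 2 ^ n) = insert n (S n r) := by
  unfold S
  rw [Finset.range_add_one, Finset.filter_insert, if_pos]
  · congr 1
    apply Finset.filter_congr
    intro a haa
    rw [testBit_add_pow (Finset.mem_range.mp haa)]
  · simp [testBit_self_add hr]

lemma n_not_mem_S (n r : ℕ) : n ∉ S n r := by
  intro h
  have := (Finset.mem_filter.mp h).1
  simp at this

lemma card_S_high {n r : ℕ} (hr : r < 2 ^ n) :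
    (S (n + 1) (r + 2 ^ n)).card = (S n r).card + 1 := by
  rw [S_high hr, Finset.card_insert_of_notMem (n_not_mem_S n r)]

lemma wt_g : ∀ n i, i < 2 ^ n → wt n (g n i) = 2 ^ (S n i).card := by
  intro n
  induction n with
  | zero =>
    intro i hi
    interval_cases i
    have hS : S 0 0 = ∅ := by simp [S]
    rw [hS]
    simp only [Finset.card_empty, pow_zero]
    have : wt 0 (g 0 0) = ((Finset.range 1).filter fun c => g 0 0 c ≠ 0).card := rfl
    rw [this, Finset.range_one, Finset.filter_singleton, if_pos]
    · simp
    · show G 0 0 0 ≠ 0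
      simp [G]
  | succ n ih =>
    intro i hi
    rcases lt_or_ge i (2 ^ n) with h | h
    · rw [wt_succ]
      have h1 : wt n (g (n+1) i) = wt n (g n i) :=
        wt_congr fun c hc => G_low_low h hc
      have h2 : wt n (fun c => g (n+1) i (c + 2 ^ n)) = wt n 0 :=
        wt_congr fun c hc => G_low_high h
      rw [h1, h2, wt_zero, add_zero, ih i h, S_low h]
    · obtain ⟨r, rfl⟩ : ∃ r, i = r + 2 ^ n := ⟨i - 2 ^ n, by omega⟩
      have hrlt : r < 2 ^ n := by
        have h2 : (2:ℕ) ^ (n+1) = 2 ^ n + 2 ^ n := by ring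
        omega
      rw [wt_succ]
      have h1 : wt n (g (n+1) (r + 2 ^ n)) = wt n (g n r) :=
        wt_congr fun c hc => G_high_low hrlt hc
      have h2 : wt n (fun c => g (n+1) (r + 2 ^ n) (c + 2 ^ n)) = wt n (g n r) :=
        wt_congr fun c hc => G_high_high hrlt hc
      rw [h1, h2, ih r hrlt, card_S_high hrlt]
      ring

-- char-2 sum over symmetric difference
lemma sum_add_sum (A B : Finset ℕ) (f : ℕ → (ℕ → ZMod 2)) :
    (∑ a ∈ A, f a) + (∑ b ∈ B, f b) = ∑ x ∈ symmDiff A B, f x := by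
  have hA : (∑ a ∈ A, f a) = (∑ a ∈ A \ B, f a) + (∑ a ∈ A ∩ B, f a) := by
    rw [← Finset.sum_union (Finset.disjoint_sdiff_inter A B), Finset.sdiff_union_inter]
  have hB : (∑ a ∈ B, f a) = (∑ a ∈ B \ A, f a) + (∑ a ∈ A ∩ B, f a) := by
    rw [Finset.inter_comm]
    rw [← Finset.sum_union (Finset.disjoint_sdiff_inter B A), Finset.sdiff_union_inter]
  have hS : (∑ x ∈ symmDiff A B, f x) = (∑ a ∈ A \ B, f a) + (∑ a ∈ B \ A, f a) := by
    rw [symmDiff_def]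
    exact Finset.sum_union disjoint_sdiff_sdiff
  have hT : (∑ a ∈ A ∩ B, f a) + (∑ a ∈ A ∩ B, f a) = 0 := by
    funext c
    have h2 : (2 : ZMod 2) = 0 := by decide
    show (∑ a ∈ A ∩ B, f a) c + (∑ a ∈ A ∩ B, f a) c = 0
    have : (∑ a ∈ A ∩ B, f a) c + (∑ a ∈ A ∩ B, f a) c
        = 2 * (∑ a ∈ A ∩ B, f a) c := by ring
    rw [this, h2, zero_mul]
  rw [hA, hB, hS]
  have : (∑ a ∈ A \ B, f a) + (∑ a ∈ A ∩ B, f a) + ((∑ a ∈ B \ A, f a) + (∑ a ∈ A ∩ B, f a))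
      = (∑ a ∈ A \ B, f a) + (∑ a ∈ B \ A, f a)
        + ((∑ a ∈ A ∩ B, f a) + (∑ a ∈ A ∩ B, f a)) := by ring
  rw [this, hT, add_zero]

lemma min_wt_le : ∀ n (H : Finset ℕ), (∀ h ∈ H, h < 2 ^ n) → ∀ (hne : H.Nonempty),
    (H.inf' hne fun i => 2 ^ (S n i).card) ≤ wt n (∑ h ∈ H, g n h) := by
  intro n
  induction n with
  | zero =>
    intro H hb hne
    have hH : H = {0} := by
      apply Finset.eq_singleton_iff_nonempty_unique_mem.mpr
      exact ⟨hne, fun x hx => by have := hb x hx; omega⟩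
    subst hH
    rw [Finset.sum_singleton, wt_g 0 0 (by norm_num), Finset.inf'_singleton]
  | succ n ih =>
    intro H hb hne
    have hpow : (2:ℕ) ^ (n + 1) = 2 ^ n + 2 ^ n := by ring
    set H0 := H.filter (fun h => h < 2 ^ n) with hH0
    set H1c := H.filter (fun h => ¬ h < 2 ^ n) with hH1c
    set H1 := H1c.image (fun h => h - 2 ^ n) with hH1
    have hbH0 : ∀ h ∈ H0, h < 2 ^ n := fun h hh => (Finset.mem_filter.mp hh).2
    have hmemH1 : ∀ h ∈ H1, ∃ x ∈ H, 2 ^ n ≤ x ∧ x < 2 ^ (n+1) ∧ h = x - 2 ^ n := by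
      intro h hh
      obtain ⟨x, hx, rfl⟩ := Finset.mem_image.mp hh
      have h1 := (Finset.mem_filter.mp hx).2
      have h2 := (Finset.mem_filter.mp hx).1
      exact ⟨x, h2, by omega, hb x h2, rfl⟩
    have hbH1 : ∀ h ∈ H1, h < 2 ^ n := by
      intro h hh
      obtain ⟨x, _, hx1, hx2, rfl⟩ := hmemH1 h hh
      omega
    set u := ∑ h ∈ H0, g n h with hu
    set w := ∑ h ∈ H1, g n h with hwdef
    have hw : w = ∑ h ∈ H1c, g n (h - 2 ^ n) := by
      rw [hwdef, hH1]
      apply Finset.sum_image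
      intro a ha b hbb hab
      have h1 := (Finset.mem_filter.mp ha).2
      have h2 := (Finset.mem_filter.mp hbb).2
      simp only at hab
      omega
    have hsplit : H = H0 ∪ H1c := (Finset.filter_union_filter_not_eq _ H).symm
    have hdisj : Disjoint H0 H1c := Finset.disjoint_filter_filter_not H H _
    have hvsplit : ∑ h ∈ H, g (n+1) h = (∑ h ∈ H0, g (n+1) h) + (∑ h ∈ H1c, g (n+1) h) := by
      rw [hsplit, Finset.sum_union hdisj]
    have hA : ∀ c < 2 ^ n, (∑ h ∈ H, g (n+1) h) c = (u + w) c := by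
      intro c hc
      rw [hvsplit]
      simp only [Pi.add_apply, Finset.sum_apply, hu, hw]
      congr 1
      · exact Finset.sum_congr rfl fun h hh => G_low_low (hbH0 h hh) hc
      · apply Finset.sum_congr rfl
        intro h hh
        have h1 := (Finset.mem_filter.mp hh).2
        obtain ⟨r, rfl⟩ : ∃ r, h = r + 2 ^ n := ⟨h - 2 ^ n, by omega⟩
        have : r + 2 ^ n - 2 ^ n = r := by omega
        rw [this]
        exact G_high_low (by have := hb _ (Finset.mem_filter.mp hh).1; omega) hc
    have hB : ∀ c < 2 ^ n, (∑ h ∈ H, g (n+1) h) (c + 2 ^ n) = w c := by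
      intro c hc
      rw [hvsplit]
      simp only [Pi.add_apply, Finset.sum_apply, hw]
      have hz : (∑ h ∈ H0, g (n+1) h) (c + 2 ^ n) = 0 := by
        rw [Finset.sum_apply]
        apply Finset.sum_eq_zero
        intro h hh
        exact G_low_high (hbH0 h hh)
      rw [Finset.sum_apply] at hz
      rw [hz, zero_add]
      apply Finset.sum_congr rfl
      intro h hh
      have h1 := (Finset.mem_filter.mp hh).2
      obtain ⟨r, rfl⟩ : ∃ r, h = r + 2 ^ n := ⟨h - 2 ^ n, by omega⟩
      have h3 : r + 2 ^ n - 2 ^ n = r := by omega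
      rw [h3]
      exact G_high_high (by have := hb _ (Finset.mem_filter.mp hh).1; omega) hc
    rw [wt_succ, wt_congr hA, wt_congr hB]
    have hD : u + w = ∑ x ∈ symmDiff H0 H1, g n x := sum_add_sum H0 H1 (g n)
    by_cases h1e : H1 = ∅
    · have hc : H1c = ∅ := Finset.image_eq_empty.mp h1e
      have hHH0 : H = H0 := by rw [hsplit, hc, Finset.union_empty]
      have hw0 : w = 0 := by rw [hw, hc, Finset.sum_empty]
      rw [hw0, wt_zero, add_zero, add_zero]
      have hne0 : H0.Nonempty := hHH0 ▸ hne
      refine le_trans ?_ (ih H0 hbH0 hne0)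
      obtain ⟨j, hj, hjeq⟩ := Finset.exists_mem_eq_inf' hne0 (fun i => 2 ^ (S n i).card)
      rw [hjeq]
      have hsj : (2:ℕ) ^ (S (n+1) j).card = 2 ^ (S n j).card := by rw [S_low (hbH0 j hj)]
      rw [← hsj]
      exact Finset.inf'_le _ (hHH0 ▸ hj)
    · have hne1 : H1.Nonempty := Finset.nonempty_iff_ne_empty.mpr h1e
      have hwge := ih H1 hbH1 hne1
      obtain ⟨j1, hj1, hj1eq⟩ := Finset.exists_mem_eq_inf' hne1 (fun i => 2 ^ (S n i).card)
      obtain ⟨x1, hx1H, hx1ge, hx1lt, hx1eq⟩ := hmemH1 j1 hj1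
      have hj1lt : j1 < 2 ^ n := hbH1 j1 hj1
      have hfx1 : (2:ℕ) ^ (S (n+1) x1).card = 2 * 2 ^ (S n j1).card := by
        have hx : x1 = j1 + 2 ^ n := by omega
        rw [hx, card_S_high hj1lt]
        ring
      have hTle : (H.inf' hne fun i => 2 ^ (S (n+1) i).card) ≤ 2 * 2 ^ (S n j1).card := by
        rw [← hfx1]; exact Finset.inf'_le _ hx1H
      have hm1w : 2 ^ (S n j1).card ≤ wt n w := by rw [← hj1eq]; exact hwge
      rw [hD]
      by_cases hDe : symmDiff H0 H1 = ∅
      · rw [hDe, Finset.sum_empty, wt_zero, zero_add]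
        have hEq : H0 = H1 := by
          have : symmDiff H0 H1 = (⊥ : Finset ℕ) := hDe
          exact symmDiff_eq_bot.mp this
        have hj1H : j1 ∈ H := (Finset.mem_filter.mp (hEq ▸ hj1)).1
        have hstep : (H.inf' hne fun i => 2 ^ (S (n+1) i).card) ≤ 2 ^ (S n j1).card := by
          have hs : (2:ℕ) ^ (S (n+1) j1).card = 2 ^ (S n j1).card := by rw [S_low hj1lt]
          rw [← hs]; exact Finset.inf'_le _ hj1H
        omega
      · have hneD : (symmDiff H0 H1).Nonempty := Finset.nonempty_iff_ne_empty.mpr hDe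
        have hbD : ∀ h ∈ symmDiff H0 H1, h < 2 ^ n := by
          intro h hh
          rcases Finset.mem_symmDiff.mp hh with ⟨hd, _⟩ | ⟨hd, _⟩
          · exact hbH0 h hd
          · exact hbH1 h hd
        have hDge := ih _ hbD hneD
        obtain ⟨d, hd, hdeq⟩ := Finset.exists_mem_eq_inf' hneD (fun i => 2 ^ (S n i).card)
        rw [hdeq] at hDge
        rcases Finset.mem_symmDiff.mp hd with ⟨hd0, _⟩ | ⟨hd1, _⟩
        · have hstep : (H.inf' hne fun i => 2 ^ (S (n+1) i).card) ≤ 2 ^ (S n d).card := by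
            have hs : (2:ℕ) ^ (S (n+1) d).card = 2 ^ (S n d).card := by
              rw [S_low (hbH0 d hd0)]
            rw [← hs]; exact Finset.inf'_le _ (Finset.mem_filter.mp hd0).1
          omega
        · have hstep : 2 ^ (S n j1).card ≤ 2 ^ (S n d).card := by
            rw [← hj1eq]; exact Finset.inf'_le _ hd1
          omega

/-- the minimum weight over nonzero codewords of C(I) equals
min_{i∈I} w(g_i) = min_{i∈I} 2^{|S_i|}. -/
theorem min_distance (n : ℕ) (hn : 1 ≤ n) (I : Finset ℕ) (hI : I.Nonempty)
    (hIr : ∀ i ∈ I, i < 2 ^ n) :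
    (∀ v ∈ codewords n I, v ≠ 0 → (I.inf' hI fun i => wt n (g n i)) ≤ wt n v) ∧
    (∃ v ∈ codewords n I, v ≠ 0 ∧ wt n v = I.inf' hI fun i => wt n (g n i)) ∧
    (I.inf' hI fun i => wt n (g n i)) = (I.inf' hI fun i => 2 ^ (S n i).card) := by
  have h3 : (I.inf' hI fun i => wt n (g n i)) = (I.inf' hI fun i => 2 ^ (S n i).card) :=
    Finset.inf'_congr hI rfl fun i hi => wt_g n i (hIr i hi)
  refine ⟨?_, ?_, h3⟩
  · intro v hv hvne
    rw [h3]
    obtain ⟨H, hHp, hveq⟩ := Finset.mem_image.mp hv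
    have hHsub : H ⊆ I := Finset.mem_powerset.mp hHp
    have hHne : H.Nonempty := by
      rcases H.eq_empty_or_nonempty with h | h
      · exfalso; apply hvne; rw [← hveq, h, Finset.sum_empty]
      · exact h
    have hb : ∀ h ∈ H, h < 2 ^ n := fun h hh => hIr h (hHsub hh)
    calc (I.inf' hI fun i => 2 ^ (S n i).card)
        ≤ (H.inf' hHne fun i => 2 ^ (S n i).card) := by
          obtain ⟨j, hj, hjeq⟩ := Finset.exists_mem_eq_inf' hHne (fun i => 2 ^ (S n i).card)
          rw [hjeq]
          exact Finset.inf'_le _ (hHsub hj)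
      _ ≤ wt n (∑ h ∈ H, g n h) := min_wt_le n H hb hHne
      _ = wt n v := by rw [hveq]
  · obtain ⟨i, hi, hieq⟩ := Finset.exists_mem_eq_inf' hI (fun i => wt n (g n i))
    refine ⟨g n i, ?_, ?_, hieq.symm⟩
    · apply Finset.mem_image.mpr
      exact ⟨{i}, Finset.mem_powerset.mpr (Finset.singleton_subset_iff.mpr hi),
        Finset.sum_singleton _ _⟩
    · intro h0
      have h1 : g n i i = 0 := by rw [h0]; rfl
      rw [show g n i i = G n i i from rfl, G_self n i (hIr i hi)] at h1
      exact one_ne_zero h1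
end
end
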